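/- The equation x⁴ - 2y² = 1 has no positive integer solutions (x, y). -/

import Mathlib

theorem stmt_6 (x y : ℤ) (hx : 0 < x) (hy : 0 < y) :
    x ^ 4 - 2 * y ^ 2 ≠ 1 := by
  intro h
  -- x is odd since x⁴ = 1 + 2y² is odd
  have hodd : x % 2 = 1 := by
    have h2 : x ^ 4 % 2 = 1 := by omega
    have := Int.emod_emod_of_dvd x (dvd_refl 2)
    rcases Int.emod_two_eq x with h0 | h0
    · exfalso
      obtain ⟨t, ht⟩ := Int.dvd_of_emod_eq_zero h0
      have : x ^ 4 = 2 * (8 * t ^ 4) := by rw [ht]; ring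
      omega
    · exact h0
  obtain ⟨t, ht⟩ : ∃ t, x = 2 * t + 1 := ⟨x / 2, by omega⟩
  -- y² = (x²-1) * s with s = (x²+1)/2 = 2t²+2t+1
  have key : (x ^ 2 - 1) * (2 * t ^ 2 + 2 * t + 1) = y ^ 2 := by
    have : 2 * ((x ^ 2 - 1) * (2 * t ^ 2 + 2 * t + 1)) = 2 * y ^ 2 := by
      rw [ht] at h ⊢; ring_nf; ring_nf at h; linarith
    linarith
  have hcop : IsCoprime (x ^ 2 - 1) (2 * t ^ 2 + 2 * t + 1) := by
    refine ⟨t ^ 2 + t, 1 - 2 * (t ^ 2 + t), ?_⟩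
    rw [ht]; ring
  obtain ⟨d, hd⟩ := Int.sq_of_isCoprime hcop key
  have hx2 : 1 ≤ x ^ 2 := by nlinarith
  rcases hd with hd | hd
  · -- x² - 1 = d², a square between (x-1)² and x² unless x = 1
    rcases eq_or_lt_of_le (show (1:ℤ) ≤ x by omega) with h1 | h1
    · -- x = 1 gives y = 0
      have : x = 1 := h1.symm
      rw [this] at h
      nlinarith
    · have h2x : 2 ≤ x := h1
      have hd0 : 0 ≤ d ^ 2 := sq_nonneg d
      set e := |d| with he
      have he2 : e ^ 2 = x ^ 2 - 1 := by rw [he, sq_abs]; omega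
      have he0 : 0 ≤ e := abs_nonneg d
      have hlt : e < x := by nlinarith
      have hle : e ≤ x - 1 := by omega
      nlinarith
  · -- x² - 1 = -d² forces x = 1
    have : x ^ 2 = 1 := by nlinarith [sq_nonneg d]
    have : x = 1 := by nlinarith
    rw [this] at h
    nlinarith
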